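/- Comparison between the supporting-normal quantity M and the radial defect N (relation (7.2)/eqn:N-ineq): Identify ℝⁿ = ℝ^{n−1} × ℝ with n ≥ 2. Let L > 0 and let f : ℝ^{n−1} → ℝ be convex and L-Lipschitz on the closed unit ball, with f(0) = 0 and f ≥ 0 there. Let Ω ⊆ ℝⁿ be an open convex set with 0 ∈ ∂Ω such that: (a) (x′, f(x′)) ∈ ∂Ω for every ‖x′‖ ≤ 1; (b) every y ∈ ∂Ω with ‖y‖ ≤ √(1+L²) equals (x′, f(x′)) for some ‖x′‖ ≤ 1; (c) {(x′, s) : ‖x′‖ < 1, f(x′) < s < L+1} ⊆ Ω, and every (x′, s) ∈ Ω with ‖x′‖ < 1 and s < L+1 satisfies s > f(x′). For θ ∈ 𝕊^{n−2} and t > 0 set N(t,θ) := t·f′⁺(t,θ) − f(tθ), where f′⁺(t,θ) is the right derivative at s = t of s ↦ f(sθ). Then for every t ∈ (0,1): M₀(t) ≤ sup_{θ ∈ 𝕊^{n−2}} N(t,θ) ≤ √(1+L²) · M₀(√(1+L²)·t). -/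

import Mathlib

open Set
open scoped RealInnerProductSpace

noncomputable section

/-- A unit vector `ν` is an outer supporting normal of `Ω` at `y` if
`⟨ν, z − y⟩ ≤ 0` for all `z ∈ Ω`. -/
def IsOuterNormal {E : Type*} [NormedAddCommGroup E] [InnerProductSpace ℝ E]
    (Ω : Set E) (y ν : E) : Prop :=
  ‖ν‖ = 1 ∧ ∀ z ∈ Ω, ⟪ν, z - y⟫ ≤ 0

/-- `M_x(t) = sup {⟨ν, y − x⟩ : y ∈ ∂Ω, 0 < ‖y − x‖ ≤ t, ν an outer supporting normal at y}`
(`sSup ∅ = 0` in `ℝ`, so the empty case gives `0`). -/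
noncomputable def Mfun {E : Type*} [NormedAddCommGroup E] [InnerProductSpace ℝ E]
    (Ω : Set E) (x : E) (t : ℝ) : ℝ :=
  sSup {m : ℝ | ∃ y ν : E, y ∈ frontier Ω ∧ 0 < ‖y - x‖ ∧ ‖y - x‖ ≤ t ∧
    IsOuterNormal Ω y ν ∧ m = ⟪ν, y - x⟫}

/-- `ℝⁿ = ℝ^{n−1} × ℝ`, with the Euclidean (`ℓ²`) product structure. -/
abbrev ProdSpace (m : ℕ) := WithLp 2 (EuclideanSpace ℝ (Fin m) × ℝ)

/-- The point `(x′, s) ∈ ℝ^{m} × ℝ`. -/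
def graphPt {m : ℕ} (x' : EuclideanSpace ℝ (Fin m)) (s : ℝ) : ProdSpace m :=
  (WithLp.equiv 2 (EuclideanSpace ℝ (Fin m) × ℝ)).symm (x', s)

/-- `N(t,θ) = t·f′⁺(t,θ) − f(tθ)`, where `f′⁺(t,θ)` is the right derivative at `s = t`
of the convex function `s ↦ f(sθ)`, rendered as the derivative within `Ici t`. -/
noncomputable def Nrad {m : ℕ} (f : EuclideanSpace ℝ (Fin m) → ℝ) (t : ℝ)
    (θ : EuclideanSpace ℝ (Fin m)) : ℝ :=
  t * derivWithin (fun s : ℝ => f (s • θ)) (Ici t) t - f (t • θ)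

/-! Auxiliary lemmas -/

lemma convex_right_deriv {g : ℝ → ℝ} {t L : ℝ} (hg : ConvexOn ℝ (Icc (-1:ℝ) 1) g)
    (ht0 : 0 < t) (ht1 : t < 1)
    (hLip : ∀ a ∈ Icc (-1:ℝ) 1, ∀ b ∈ Icc (-1:ℝ) 1, |g a - g b| ≤ L * |a - b|) :
    ∃ c : ℝ, HasDerivWithinAt g c (Ici t) t ∧
      (∀ s, t < s → s < 1 → c * (s - t) ≤ g s - g t) ∧
      (∀ d : ℝ, (∀ s, t < s → s < 1 → d * (s - t) ≤ g s - g t) → d ≤ c) ∧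
      c ≤ L := by
  have htI : t ∈ Icc (-1:ℝ) 1 := ⟨by linarith, le_of_lt ht1⟩
  have hmem : ∀ s : ℝ, t < s → s < 1 → s ∈ Icc (-1:ℝ) 1 := fun s hs hs1 =>
    ⟨by linarith, le_of_lt hs1⟩
  set sl : ℝ → ℝ := fun s => (g s - g t) / (s - t) with hsl
  have hslL : ∀ s ∈ Ioo t 1, -L ≤ sl s ∧ sl s ≤ L := by
    intro s hs
    have h1 : |g s - g t| ≤ L * |s - t| := hLip s (hmem s hs.1 hs.2) t htI
    have hst : 0 < s - t := by linarith [hs.1]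
    rw [abs_of_pos hst] at h1
    have := abs_le.1 h1
    constructor
    · rw [le_div_iff₀ hst]; linarith [this.1]
    · rw [div_le_iff₀ hst]; linarith [this.2]
  have hne : ((t+1)/2) ∈ Ioo t 1 := ⟨by linarith, by linarith⟩
  have hAne : (sl '' Ioo t 1).Nonempty := ⟨sl ((t+1)/2), mem_image_of_mem _ hne⟩
  have hAbdd : BddBelow (sl '' Ioo t 1) := by
    refine ⟨-L, ?_⟩
    rintro x ⟨s, hs, rfl⟩
    exact (hslL s hs).1
  set c := sInf (sl '' Ioo t 1) with hc
  have hcle : ∀ s ∈ Ioo t 1, c ≤ sl s := fun s hs => csInf_le hAbdd (mem_image_of_mem _ hs)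
  have hmono : ∀ s₁ ∈ Ioo t 1, ∀ s₂ ∈ Ioo t 1, s₁ ≤ s₂ → sl s₁ ≤ sl s₂ := by
    intro s₁ hs₁ s₂ hs₂ h12
    exact hg.secant_mono htI (hmem _ hs₁.1 hs₁.2) (hmem _ hs₂.1 hs₂.2)
      (ne_of_gt hs₁.1) (ne_of_gt hs₂.1) h12
  have htend : Filter.Tendsto sl (nhdsWithin t (Ioi t)) (nhds c) := by
    rw [tendsto_order]
    constructor
    · intro b hb
      filter_upwards [Ioo_mem_nhdsGT ht1] with s hs
      exact lt_of_lt_of_le hb (hcle s hs)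
    · intro b hb
      obtain ⟨x, hx, hxb⟩ := exists_lt_of_csInf_lt hAne hb
      obtain ⟨s₀, hs₀, rfl⟩ := hx
      filter_upwards [Ioo_mem_nhdsGT hs₀.1] with s hs
      exact lt_of_le_of_lt (hmono s ⟨hs.1, hs.2.trans hs₀.2⟩ s₀ hs₀ (le_of_lt hs.2)) hxb
  have hderiv : HasDerivWithinAt g c (Ici t) t := by
    rw [hasDerivWithinAt_iff_tendsto_slope]
    rw [show Ici t \ {t} = Ioi t from by ext; simp [lt_iff_le_and_ne]]
    refine htend.congr' ?_
    filter_upwards [self_mem_nhdsWithin] with s (hs : s ∈ Ioi t)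
    rw [slope_def_field]
  refine ⟨c, hderiv, ?_, ?_, ?_⟩
  · intro s hs hs1
    have := hcle s ⟨hs, hs1⟩
    have hst : 0 < s - t := by linarith
    rw [hsl, le_div_iff₀ hst] at this
    linarith
  · intro d hd
    refine le_csInf hAne ?_
    rintro x ⟨s, hs, rfl⟩
    have := hd s hs.1 hs.2
    have hst : 0 < s - t := by linarith [hs.1]
    rw [hsl, le_div_iff₀ hst]
    linarith
  · exact le_trans (hcle _ hne) (hslL _ hne).2

lemma inner_graphPt {m : ℕ} (ν : ProdSpace m) (a : EuclideanSpace ℝ (Fin m)) (s : ℝ) :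
    ⟪ν, graphPt a s⟫ = ⟪ν.fst, a⟫ + ν.snd * s := by
  rw [show graphPt a s = (WithLp.equiv 2 _).symm (a, s) from rfl, WithLp.prod_inner_apply]
  simp [RCLike.inner_apply]; ring

lemma graphPt_sub {m : ℕ} (a b : EuclideanSpace ℝ (Fin m)) (s u : ℝ) :
    graphPt a s - graphPt b u = graphPt (a - b) (s - u) := rfl

lemma graphPt_zero {m : ℕ} : graphPt (0 : EuclideanSpace ℝ (Fin m)) 0 = 0 := rfl

lemma norm_graphPt_sq {m : ℕ} (a : EuclideanSpace ℝ (Fin m)) (s : ℝ) :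
    ‖graphPt a s‖ ^ 2 = ‖a‖ ^ 2 + s ^ 2 := by
  rw [WithLp.prod_norm_sq_eq_of_L2]; norm_num [graphPt]

lemma norm_prod_sq {m : ℕ} (ν : ProdSpace m) : ‖ν‖ ^ 2 = ‖ν.fst‖ ^ 2 + ν.snd ^ 2 := by
  rw [WithLp.prod_norm_sq_eq_of_L2]; norm_num

lemma normal_decomp {m : ℕ} {L : ℝ} (hL : 0 < L) {f : EuclideanSpace ℝ (Fin m) → ℝ}
    (hlip : ∀ x ∈ Metric.closedBall (0 : EuclideanSpace ℝ (Fin m)) 1,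
      ∀ y ∈ Metric.closedBall (0 : EuclideanSpace ℝ (Fin m)) 1,
        |f x - f y| ≤ L * ‖x - y‖)
    (hf0 : f 0 = 0)
    {Ω : Set (ProdSpace m)}
    (hc₁ : ∀ (x' : EuclideanSpace ℝ (Fin m)) (s : ℝ),
      ‖x'‖ < 1 → f x' < s → s < L + 1 → graphPt x' s ∈ Ω)
    {x' : EuclideanSpace ℝ (Fin m)} (hx : ‖x'‖ < 1) {ν : ProdSpace m} (hν1 : ‖ν‖ = 1)
    (hsup : ∀ z ∈ Ω, ⟪ν, z - graphPt x' (f x')⟫ ≤ 0) :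
    ∃ a : ℝ, 0 < a ∧ a ≤ 1 ∧ ν.snd = -a ∧ 1 ≤ a * Real.sqrt (1 + L ^ 2) ∧
      ∀ w' : EuclideanSpace ℝ (Fin m), ‖w'‖ < 1 → ⟪ν.fst, w' - x'⟫ ≤ a * (f w' - f x') := by
  have hball : ∀ w' : EuclideanSpace ℝ (Fin m), ‖w'‖ < 1 →
      w' ∈ Metric.closedBall (0 : EuclideanSpace ℝ (Fin m)) 1 := by
    intro w' h; simpa using le_of_lt h
  have hfb : ∀ w' : EuclideanSpace ℝ (Fin m), ‖w'‖ < 1 → f w' < L + 1 := by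
    intro w' h
    have := hlip w' (hball w' h) 0 (by simp)
    rw [hf0, sub_zero, sub_zero] at this
    have := (abs_le.1 this).2
    nlinarith [norm_nonneg w']
  have hkey0 : ∀ w' : EuclideanSpace ℝ (Fin m), ‖w'‖ < 1 → ∀ ε : ℝ, 0 < ε → f w' + ε < L + 1 →
      ⟪ν.fst, w' - x'⟫ + ν.snd * (f w' + ε - f x') ≤ 0 := by
    intro w' hw ε hε hεL
    have hz : graphPt w' (f w' + ε) ∈ Ω := hc₁ w' _ hw (by linarith) hεL
    have := hsup _ hz
    rwa [graphPt_sub, inner_graphPt] at this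
  have hsnd0 : ν.snd ≤ 0 := by
    have hfx := hfb x' hx
    set ε := (L + 1 - f x') / 2 with hε
    have hε0 : 0 < ε := by rw [hε]; linarith
    have := hkey0 x' hx ε hε0 (by rw [hε]; linarith)
    simp only [sub_self, inner_zero_right] at this
    nlinarith
  have hkey : ∀ w' : EuclideanSpace ℝ (Fin m), ‖w'‖ < 1 →
      ⟪ν.fst, w' - x'⟫ + ν.snd * (f w' - f x') ≤ 0 := by
    intro w' hw
    by_contra hcon
    push_neg at hcon
    set B := ⟪ν.fst, w' - x'⟫ + ν.snd * (f w' - f x') with hB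
    have hfw := hfb w' hw
    set ε := min ((L + 1 - f w') / 2) (B / (1 - ν.snd)) with hε
    have h1 : 0 < 1 - ν.snd := by linarith
    have hε0 : 0 < ε := lt_min (by linarith) (div_pos hcon h1)
    have hεL : f w' + ε < L + 1 := by
      have : ε ≤ (L + 1 - f w') / 2 := min_le_left _ _
      linarith
    have h2 := hkey0 w' hw ε hε0 hεL
    have h3 : ε ≤ B / (1 - ν.snd) := min_le_right _ _
    have h4 : ε * (1 - ν.snd) ≤ B := by
      rw [← le_div_iff₀ h1]; exact h3
    have h5 : B + ν.snd * ε ≤ 0 := by rw [hB]; ring_nf; ring_nf at h2; linarith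
    nlinarith
  have hsndlt : ν.snd < 0 := by
    rcases lt_or_eq_of_le hsnd0 with h | h
    · exact h
    · exfalso
      have hν1' : ‖ν.fst‖ ^ 2 + ν.snd ^ 2 = 1 := by
        have h2 := norm_prod_sq ν; rw [hν1, one_pow] at h2; exact h2.symm
      have hfst : ν.fst ≠ 0 := by
        intro h0
        rw [h0, h] at hν1'
        simp at hν1'
      set δ := (1 - ‖x'‖) / (‖ν.fst‖ + 1) with hδ
      have hδ0 : 0 < δ := div_pos (by linarith) (by positivity)
      have hw : ‖x' + δ • ν.fst‖ < 1 := by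
        calc ‖x' + δ • ν.fst‖ ≤ ‖x'‖ + δ * ‖ν.fst‖ := by
              refine le_trans (norm_add_le _ _) ?_
              rw [norm_smul, Real.norm_eq_abs, abs_of_pos hδ0]
          _ < 1 := by
              have : δ * ‖ν.fst‖ < δ * (‖ν.fst‖ + 1) := by nlinarith
              rw [hδ] at this ⊢
              have h2 : (1 - ‖x'‖) / (‖ν.fst‖ + 1) * (‖ν.fst‖ + 1) = 1 - ‖x'‖ := by
                field_simp
              nlinarith
      have hks := hkey _ hw
      rw [h, zero_mul, add_zero, add_sub_cancel_left, real_inner_smul_right,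
        real_inner_self_eq_norm_sq] at hks
      have hn0 : (0:ℝ) < ‖ν.fst‖ := norm_pos_iff.2 hfst
      nlinarith [mul_pos hδ0 (pow_pos hn0 2)]
  set a := -ν.snd with ha
  have ha0 : 0 < a := by rw [ha]; linarith
  have hnp : ‖ν.fst‖ ^ 2 + ν.snd ^ 2 = 1 := by
    have h2 := norm_prod_sq ν; rw [hν1, one_pow] at h2; exact h2.symm
  have hν1' : ‖ν.fst‖ ^ 2 + a ^ 2 = 1 := by
    rw [ha]; ring_nf; ring_nf at hnp; linarith
  have ha1 : a ≤ 1 := by nlinarith [sq_nonneg (norm ν.fst)]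
  have hsub : ∀ w' : EuclideanSpace ℝ (Fin m), ‖w'‖ < 1 →
      ⟪ν.fst, w' - x'⟫ ≤ a * (f w' - f x') := by
    intro w' hw
    have := hkey w' hw
    rw [ha]; nlinarith
  have hfstL : ‖ν.fst‖ ≤ a * L := by
    rcases eq_or_ne ν.fst 0 with h | h
    · rw [h, norm_zero]; positivity
    · set δ := (1 - ‖x'‖) / 2 with hδ
      have hδ0 : 0 < δ := by rw [hδ]; linarith
      set w' := x' + (δ / ‖ν.fst‖) • ν.fst with hw'
      have hn0 : (0:ℝ) < ‖ν.fst‖ := norm_pos_iff.2 h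
      have hnw : ‖w'‖ < 1 := by
        calc ‖w'‖ ≤ ‖x'‖ + ‖(δ / ‖ν.fst‖) • ν.fst‖ := norm_add_le _ _
          _ = ‖x'‖ + δ := by
              rw [norm_smul, Real.norm_eq_abs, abs_of_pos (div_pos hδ0 hn0)]
              field_simp
          _ < 1 := by rw [hδ]; linarith
      have h1 := hsub w' hnw
      rw [hw'] at h1
      simp only [add_sub_cancel_left, real_inner_smul_right] at h1
      rw [real_inner_self_eq_norm_sq] at h1
      have h2 : f (x' + (δ / ‖ν.fst‖) • ν.fst) - f x' ≤ L * δ := by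
        have := hlip _ (hball _ hnw) x' (hball _ hx)
        have habs := (abs_le.1 this).2
        have heq : ‖x' + (δ / ‖ν.fst‖) • ν.fst - x'‖ = δ := by
          rw [add_sub_cancel_left, norm_smul, Real.norm_eq_abs, abs_of_pos (div_pos hδ0 hn0)]
          field_simp
        rw [heq] at habs
        linarith
      have h3 : δ / ‖ν.fst‖ * ‖ν.fst‖ ^ 2 = δ * ‖ν.fst‖ := by field_simp
      rw [h3] at h1
      have h4 : δ * ‖ν.fst‖ ≤ a * (L * δ) := le_trans h1 (by nlinarith)
      nlinarith
  refine ⟨a, ha0, ha1, by rw [ha, neg_neg], ?_, hsub⟩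
  have h5 : 1 ≤ a ^ 2 * (1 + L ^ 2) := by
    have h7 : ‖ν.fst‖ ^ 2 ≤ (a * L) ^ 2 := pow_le_pow_left₀ (norm_nonneg ν.fst) hfstL 2
    nlinarith
  have h6 : Real.sqrt 1 ≤ Real.sqrt (a ^ 2 * (1 + L ^ 2)) := Real.sqrt_le_sqrt h5
  rw [Real.sqrt_one, Real.sqrt_mul (sq_nonneg a), Real.sqrt_sq (le_of_lt ha0)] at h6
  exact h6

set_option maxHeartbeats 2000000 in
/-- Comparison between the supporting-normal quantity `M` and the radial defect `N`
(relation (7.2)/eqn:N-ineq), with `m = n − 1 ≥ 1`. -/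
theorem M_N_comparison {m : ℕ} (hm : 1 ≤ m) (L : ℝ) (hL : 0 < L)
    (f : EuclideanSpace ℝ (Fin m) → ℝ)
    (hconv : ConvexOn ℝ (Metric.closedBall (0 : EuclideanSpace ℝ (Fin m)) 1) f)
    (hlip : ∀ x ∈ Metric.closedBall (0 : EuclideanSpace ℝ (Fin m)) 1,
      ∀ y ∈ Metric.closedBall (0 : EuclideanSpace ℝ (Fin m)) 1,
        |f x - f y| ≤ L * ‖x - y‖)
    (hf0 : f 0 = 0)
    (hfnn : ∀ x ∈ Metric.closedBall (0 : EuclideanSpace ℝ (Fin m)) 1, 0 ≤ f x)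
    (Ω : Set (ProdSpace m)) (hopen : IsOpen Ω) (hconvΩ : Convex ℝ Ω)
    (h0 : (0 : ProdSpace m) ∈ frontier Ω)
    (ha : ∀ x' : EuclideanSpace ℝ (Fin m), ‖x'‖ ≤ 1 → graphPt x' (f x') ∈ frontier Ω)
    (hb : ∀ y ∈ frontier Ω, ‖y‖ ≤ Real.sqrt (1 + L ^ 2) →
      ∃ x' : EuclideanSpace ℝ (Fin m), ‖x'‖ ≤ 1 ∧ y = graphPt x' (f x'))
    (hc₁ : ∀ (x' : EuclideanSpace ℝ (Fin m)) (s : ℝ),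
      ‖x'‖ < 1 → f x' < s → s < L + 1 → graphPt x' s ∈ Ω)
    (hc₂ : ∀ (x' : EuclideanSpace ℝ (Fin m)) (s : ℝ),
      graphPt x' s ∈ Ω → ‖x'‖ < 1 → s < L + 1 → f x' < s) :
    ∀ t ∈ Ioo (0:ℝ) 1,
      Mfun Ω 0 t ≤
        sSup {a : ℝ | ∃ θ : EuclideanSpace ℝ (Fin m), ‖θ‖ = 1 ∧ a = Nrad f t θ} ∧
      sSup {a : ℝ | ∃ θ : EuclideanSpace ℝ (Fin m), ‖θ‖ = 1 ∧ a = Nrad f t θ} ≤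
        Real.sqrt (1 + L ^ 2) * Mfun Ω 0 (Real.sqrt (1 + L ^ 2) * t) := by
  intro t ht
  obtain ⟨ht0, ht1⟩ := ht
  have hball : ∀ w' : EuclideanSpace ℝ (Fin m), ‖w'‖ ≤ 1 →
      w' ∈ Metric.closedBall (0 : EuclideanSpace ℝ (Fin m)) 1 := by
    intro w' h; simpa using h
  -- square root facts
  have hsq : Real.sqrt (1 + L ^ 2) ^ 2 = 1 + L ^ 2 := Real.sq_sqrt (by positivity)
  have hsqrt0 : (0:ℝ) ≤ Real.sqrt (1 + L ^ 2) := Real.sqrt_nonneg _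
  have hsqrt1 : (1:ℝ) ≤ Real.sqrt (1 + L ^ 2) := by nlinarith
  -- radial norm
  have hmemθ : ∀ θ : EuclideanSpace ℝ (Fin m), ‖θ‖ = 1 → ∀ s : ℝ, 0 ≤ s → ‖s • θ‖ = s := by
    intro θ hθ s hs
    rw [norm_smul, hθ, mul_one, Real.norm_eq_abs, abs_of_nonneg hs]
  -- per-direction right derivative facts
  have keyθ : ∀ θ : EuclideanSpace ℝ (Fin m), ‖θ‖ = 1 →
      ∃ c : ℝ, derivWithin (fun s : ℝ => f (s • θ)) (Ici t) t = c ∧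
        (∀ s, t < s → s < 1 → c * (s - t) ≤ f (s • θ) - f (t • θ)) ∧
        (∀ d : ℝ, (∀ s, t < s → s < 1 → d * (s - t) ≤ f (s • θ) - f (t • θ)) → d ≤ c) ∧
        (c ≤ L ∧ 0 ≤ t * c - f (t • θ)) ∧
        (∀ r, 0 ≤ r → r ≤ t → ∀ s, t < s → s < 1 →
          (f (s • θ) - f (r • θ)) * (s - t) ≤ (f (s • θ) - f (t • θ)) * (s - r)) ∧
        (∀ r, 0 ≤ r → r ≤ t → f (t • θ) - f (r • θ) ≤ (t - r) * c) := by
    intro θ hθ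
    have hmem : ∀ s : ℝ, s ∈ Icc (-1:ℝ) 1 →
        s • θ ∈ Metric.closedBall (0 : EuclideanSpace ℝ (Fin m)) 1 := by
      intro s hs
      rw [Metric.mem_closedBall, dist_zero_right, norm_smul, hθ, mul_one, Real.norm_eq_abs]
      exact abs_le.2 ⟨hs.1, hs.2⟩
    have hgconv : ConvexOn ℝ (Icc (-1:ℝ) 1) (fun s : ℝ => f (s • θ)) := by
      refine ⟨convex_Icc _ _, ?_⟩
      intro p hpI q hqI ap bp hap hbp habp
      have := hconv.2 (hmem p hpI) (hmem q hqI) hap hbp habp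
      simpa [add_smul, smul_smul] using this
    have hgLip : ∀ p ∈ Icc (-1:ℝ) 1, ∀ q ∈ Icc (-1:ℝ) 1,
        |f (p • θ) - f (q • θ)| ≤ L * |p - q| := by
      intro p hpI q hqI
      have := hlip _ (hmem p hpI) _ (hmem q hqI)
      have hnorm : ‖p • θ - q • θ‖ = |p - q| := by
        rw [← sub_smul, norm_smul, hθ, mul_one, Real.norm_eq_abs]
      rwa [hnorm] at this
    obtain ⟨c, hder, hD2, hD4, hcL⟩ := convex_right_deriv hgconv ht0 ht1 hgLip
    have hD7 : ∀ r, 0 ≤ r → r ≤ t → f (t • θ) - f (r • θ) ≤ (t - r) * c := by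
      intro r hr0 hrt
      rcases eq_or_lt_of_le hrt with rfl | hrt'
      · simp
      · have hd : (f (t • θ) - f (r • θ)) / (t - r) ≤ c := by
          refine hD4 _ ?_
          intro s hs hs1
          have hrm : r ∈ Icc (-1:ℝ) 1 := ⟨by linarith, by linarith⟩
          have hsm : s ∈ Icc (-1:ℝ) 1 := ⟨by linarith, le_of_lt hs1⟩
          have hsl := hgconv.slope_mono_adjacent hrm hsm hrt' hs
          have hst : (0:ℝ) < s - t := by linarith
          rw [← le_div_iff₀ hst]
          exact hsl
        rw [div_le_iff₀ (by linarith : (0:ℝ) < t - r)] at hd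
        linarith
    refine ⟨c, hder.derivWithin (uniqueDiffOn_Ici t t (le_refl t)), hD2, hD4, ⟨hcL, ?_⟩, ?_,
      hD7⟩
    · have h00 := hD7 0 (le_refl 0) ht0.le
      rw [zero_smul, hf0, sub_zero] at h00
      linarith
    · intro r hr0 hrt s hs hs1
      rcases eq_or_lt_of_le hrt with rfl | hrt'
      · apply le_of_eq; ring
      · have hrm : r ∈ Icc (-1:ℝ) 1 := ⟨by linarith, by linarith⟩
        have htm : t ∈ Icc (-1:ℝ) 1 := ⟨by linarith, le_of_lt ht1⟩
        have hsm : s ∈ Icc (-1:ℝ) 1 := ⟨by linarith, le_of_lt hs1⟩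
        have hsec := hgconv.secant_mono hsm hrm htm (by intro h; rw [h] at hrt'; linarith)
          (ne_of_lt (by linarith)) hrt
        have e1 : (f (r • θ) - f (s • θ)) / (r - s) =
            (f (s • θ) - f (r • θ)) / (s - r) := by
          rw [← neg_div_neg_eq]; ring_nf
        have e2 : (f (t • θ) - f (s • θ)) / (t - s) =
            (f (s • θ) - f (t • θ)) / (s - t) := by
          rw [← neg_div_neg_eq]; ring_nf
        rw [e1, e2] at hsec
        rw [div_le_div_iff₀ (by linarith) (by linarith)] at hsec
        exact hsec
  -- the N-set
  have hNbdd : BddAbove {a : ℝ | ∃ θ : EuclideanSpace ℝ (Fin m), ‖θ‖ = 1 ∧ a = Nrad f t θ} := by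
    refine ⟨L, ?_⟩
    rintro x ⟨θ, hθ, rfl⟩
    obtain ⟨c, hcEq, _, _, ⟨hcL, hpos⟩, _, _⟩ := keyθ θ hθ
    have hfnn' : 0 ≤ f (t • θ) :=
      hfnn _ (hball _ (by rw [hmemθ θ hθ t ht0.le]; exact ht1.le))
    simp only [Nrad, hcEq]
    nlinarith
  have hθ₀ : ‖(EuclideanSpace.single (⟨0, hm⟩ : Fin m) (1:ℝ))‖ = 1 := by
    rw [EuclideanSpace.norm_single]; norm_num
  have hNS0 : 0 ≤ sSup {a : ℝ | ∃ θ : EuclideanSpace ℝ (Fin m), ‖θ‖ = 1 ∧ a = Nrad f t θ} := by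
    obtain ⟨c, hcEq, _, _, ⟨_, hpos⟩, _, _⟩ := keyθ _ hθ₀
    refine le_trans ?_ (le_csSup hNbdd ⟨_, hθ₀, rfl⟩)
    simp only [Nrad, hcEq]
    exact hpos
  constructor
  · -- Part 1
    simp only [Mfun]
    refine Real.sSup_le ?_ hNS0
    rintro x ⟨y, ν, hyF, hy0, hyt, hνn, rfl⟩
    obtain ⟨hν1, hνsup⟩ := hνn
    rw [sub_zero] at hy0 hyt
    obtain ⟨x', hx'1, hyeq⟩ := hb y hyF (le_trans hyt (by linarith))
    subst hyeq
    have hyn : ‖graphPt x' (f x')‖ ^ 2 = ‖x'‖ ^ 2 + (f x') ^ 2 := norm_graphPt_sq _ _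
    have hx't : ‖x'‖ ≤ t := by
      refine le_trans ?_ hyt
      have hsqle : ‖x'‖ ^ 2 ≤ ‖graphPt x' (f x')‖ ^ 2 := by
        rw [hyn]; nlinarith [sq_nonneg (f x')]
      have := Real.sqrt_le_sqrt hsqle
      rwa [Real.sqrt_sq (norm_nonneg _), Real.sqrt_sq (norm_nonneg _)] at this
    have hx'lt : ‖x'‖ < 1 := lt_of_le_of_lt hx't ht1
    have hx'0 : x' ≠ 0 := by
      rintro rfl
      rw [hf0, graphPt_zero, norm_zero] at hy0
      exact lt_irrefl 0 hy0
    have hr0 : 0 < ‖x'‖ := norm_pos_iff.2 hx'0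
    set r := ‖x'‖ with hr
    set θ := r⁻¹ • x' with hθdef
    have hθ : ‖θ‖ = 1 := by
      rw [hθdef, norm_smul, Real.norm_eq_abs, abs_of_pos (by positivity), ← hr,
        inv_mul_cancel₀ (ne_of_gt hr0)]
    have hx'θ : x' = r • θ := by
      rw [hθdef, smul_smul, mul_inv_cancel₀ (ne_of_gt hr0), one_smul]
    obtain ⟨a, ha0, ha1, hsnd, _, hsub⟩ := normal_decomp hL hlip hf0 hc₁ hx'lt hν1 hνsup
    obtain ⟨c, hcEq, hD2, hD4, ⟨hcL, hpos⟩, hD6, hD7⟩ := keyθ θ hθ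
    have hradd : ∀ s : ℝ, 0 ≤ s → s < 1 →
        ⟪ν.fst, θ⟫ * (s - r) ≤ a * (f (s • θ) - f x') := by
      intro s hs hs1
      have hws : ‖s • θ‖ < 1 := by rw [hmemθ θ hθ s hs]; exact hs1
      have h1 := hsub (s • θ) hws
      rw [hx'θ, ← sub_smul, real_inner_smul_right, ← hx'θ] at h1
      linarith [h1]
    have h2 := hradd t ht0.le ht1
    have hdac : ⟪ν.fst, θ⟫ ≤ a * c := by
      have hdc : ⟪ν.fst, θ⟫ / a ≤ c := by
        refine hD4 _ ?_
        intro s hs hs1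
        have hsr : (0:ℝ) < s - r := by linarith
        have hst : (0:ℝ) < s - t := by linarith
        have h1 := hradd s (by linarith) hs1
        have h6 := hD6 r (le_of_lt hr0) hx't s hs hs1
        rw [hx'θ] at h1
        rw [div_mul_eq_mul_div, div_le_iff₀ ha0]
        rw [← mul_le_mul_iff_left₀ hsr]
        have hA : ⟪ν.fst, θ⟫ * (s - r) * (s - t) ≤
            a * (f (s • θ) - f (r • θ)) * (s - t) :=
          mul_le_mul_of_nonneg_right h1 hst.le
        have hB : a * ((f (s • θ) - f (r • θ)) * (s - t)) ≤
            a * ((f (s • θ) - f (t • θ)) * (s - r)) :=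
          mul_le_mul_of_nonneg_left h6 ha0.le
        nlinarith [hA, hB]
      rw [div_le_iff₀ ha0] at hdc
      linarith
    have hinner : ⟪ν, graphPt x' (f x') - 0⟫ = r * ⟪ν.fst, θ⟫ - a * f x' := by
      rw [sub_zero, inner_graphPt, hsnd]
      rw [show (⟪ν.fst, x'⟫:ℝ) = r * ⟪ν.fst, θ⟫ by rw [hx'θ, real_inner_smul_right]]
      ring
    rw [hinner]
    refine le_trans ?_ (le_csSup hNbdd ⟨θ, hθ, rfl⟩)
    simp only [Nrad, hcEq]
    rw [show f x' = f (r • θ) by rw [← hx'θ]]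
    have s1 : r * ⟪ν.fst, θ⟫ ≤ r * (a * c) := mul_le_mul_of_nonneg_left hdac hr0.le
    have s2 : f (t • θ) - f (r • θ) ≤ (t - r) * c := hD7 r hr0.le hx't
    have s3 : a * (r * c - f (r • θ)) ≤ a * (t * c - f (t • θ)) :=
      mul_le_mul_of_nonneg_left (by linarith [s2]) ha0.le
    have step3 : (0:ℝ) ≤ (1 - a) * (t * c - f (t • θ)) :=
      mul_nonneg (by linarith) hpos
    nlinarith [s1, s3, step3]
  · -- Part 2
    have hMbdd : BddAbove {m' : ℝ | ∃ y ν : ProdSpace m, y ∈ frontier Ω ∧ 0 < ‖y - 0‖ ∧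
        ‖y - 0‖ ≤ Real.sqrt (1 + L ^ 2) * t ∧ IsOuterNormal Ω y ν ∧ m' = ⟪ν, y - 0⟫} := by
      refine ⟨Real.sqrt (1 + L ^ 2) * t, ?_⟩
      rintro x ⟨y, ν, _, _, hyt, hνn, rfl⟩
      calc ⟪ν, y - 0⟫ ≤ ‖ν‖ * ‖y - 0‖ := real_inner_le_norm _ _
        _ ≤ _ := by rw [hνn.1, one_mul]; exact hyt
    have main : ∀ θ : EuclideanSpace ℝ (Fin m), ‖θ‖ = 1 →
        ∃ mm : ℝ, mm ∈ {m' : ℝ | ∃ y ν : ProdSpace m, y ∈ frontier Ω ∧ 0 < ‖y - 0‖ ∧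
          ‖y - 0‖ ≤ Real.sqrt (1 + L ^ 2) * t ∧ IsOuterNormal Ω y ν ∧ m' = ⟪ν, y - 0⟫} ∧
          0 ≤ mm ∧ Nrad f t θ ≤ Real.sqrt (1 + L ^ 2) * mm := by
      intro θ hθ
      obtain ⟨c, hcEq, hD2, hD4, ⟨hcL, hpos⟩, hD6, hD7⟩ := keyθ θ hθ
      have htθ : ‖t • θ‖ = t := hmemθ θ hθ t ht0.le
      have hyF : graphPt (t • θ) (f (t • θ)) ∈ frontier Ω := ha _ (by rw [htθ]; exact ht1.le)
      have hgt0 : 0 ≤ f (t • θ) := hfnn _ (hball _ (by rw [htθ]; exact ht1.le))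
      have hgtL : f (t • θ) ≤ L * t := by
        have := hlip (t • θ) (hball _ (by rw [htθ]; exact ht1.le)) 0 (by simp)
        rw [hf0, sub_zero, sub_zero, htθ] at this
        exact (abs_le.1 this).2
      -- the approximating outside points
      set hseq : ℕ → ℝ := fun k => (1 - t) / (k + 2) with hhdef
      have hh0 : ∀ k, 0 < hseq k := fun k => div_pos (by linarith) (by positivity)
      have hh1 : ∀ k, hseq k < 1 - t := by
        intro k
        rw [hhdef]
        refine div_lt_self (by linarith) ?_
        have : (0:ℝ) ≤ (k:ℝ) := Nat.cast_nonneg k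
        linarith
      have hhtend : Filter.Tendsto hseq Filter.atTop (nhds 0) := by
        have h1 : Filter.Tendsto (fun k : ℕ => ((k:ℝ) + 2)⁻¹) Filter.atTop (nhds 0) :=
          tendsto_inv_atTop_zero.comp
            (Filter.tendsto_atTop_add_const_right _ 2 tendsto_natCast_atTop_atTop)
        have := h1.const_mul (1 - t)
        rw [mul_zero] at this
        refine this.congr ?_
        intro k
        simp only [hhdef]
        rw [div_eq_mul_inv]
      set z : ℕ → ProdSpace m := fun k =>
        graphPt ((t + hseq k) • θ) (f (t • θ) + c * hseq k) with hzdef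
      have hzΩ : ∀ k, z k ∉ Ω := by
        intro k hk
        have h1 : ‖(t + hseq k) • θ‖ < 1 := by
          rw [hmemθ θ hθ _ (by linarith [hh0 k])]
          linarith [hh1 k]
        have h2 : f (t • θ) + c * hseq k < L + 1 := by
          have hx1 : c * hseq k ≤ L * hseq k :=
            mul_le_mul_of_nonneg_right hcL (hh0 k).le
          have hx2 : L * hseq k < L * (1 - t) := by
            exact (mul_lt_mul_iff_right₀ hL).2 (hh1 k)
          nlinarith [hgtL]
        have h3 := hc₂ _ _ hk h1 h2
        have h4 := hD2 (t + hseq k) (by linarith [hh0 k]) (by linarith [hh1 k])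
        rw [add_sub_cancel_left] at h4
        linarith
      have hz₀ : graphPt 0 ((L + 1) / 2) ∈ Ω :=
        hc₁ 0 _ (by simp) (by rw [hf0]; linarith) (by linarith)
      have hsep : ∀ k, ∃ ν : ProdSpace m, ‖ν‖ = 1 ∧ ∀ u ∈ closure Ω, ⟪ν, u - z k⟫ ≤ 0 := by
        intro k
        haveI : ContinuousSMul ℝ (ProdSpace m) := inferInstance
        obtain ⟨ℓ, hℓ⟩ := geometric_hahn_banach_open_point hconvΩ hopen (hzΩ k)
        set v := (InnerProductSpace.toDual ℝ (ProdSpace m)).symm ℓ with hv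
        have hvapp : ∀ w : ProdSpace m, ⟪v, w⟫ = ℓ w := fun w =>
          InnerProductSpace.toDual_symm_apply
        have hv0 : v ≠ 0 := by
          intro h0
          have h1 := hℓ _ hz₀
          rw [← hvapp, ← hvapp, h0] at h1
          simp at h1
        have hcls : closure Ω ⊆ {u : ProdSpace m | ℓ u ≤ ℓ (z k)} :=
          closure_minimal (fun w hw => le_of_lt (hℓ w hw))
            (isClosed_le ℓ.continuous continuous_const)
        refine ⟨‖v‖⁻¹ • v, norm_smul_inv_norm hv0, ?_⟩
        intro u hu
        rw [real_inner_smul_left, inner_sub_right, hvapp, hvapp]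
        have h2 := hcls hu
        have hinv : (0:ℝ) ≤ ‖v‖⁻¹ := by positivity
        exact mul_nonpos_iff.2 (Or.inl ⟨hinv, by simpa using sub_nonpos.2 (show ℓ u ≤ ℓ (z k) from h2)⟩)
      choose ν hν1 hνsep using hsep
      have hνmem : ∀ k, ν k ∈ Metric.sphere (0 : ProdSpace m) 1 := fun k => by
        simpa using hν1 k
      obtain ⟨νl, hνlmem, φ, hφ, hφtend⟩ :=
        tendsto_subseq_of_bounded Metric.isBounded_sphere hνmem
      have hνl1 : ‖νl‖ = 1 := by
        rw [Metric.isClosed_sphere.closure_eq] at hνlmem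
        simpa using hνlmem
      have hztend : Filter.Tendsto z Filter.atTop (nhds (graphPt (t • θ) (f (t • θ)))) := by
        rw [tendsto_iff_norm_sub_tendsto_zero]
        have hbound : ∀ k, ‖z k - graphPt (t • θ) (f (t • θ))‖ ≤ hseq k * (1 + |c|) := by
          intro k
          have hd : z k - graphPt (t • θ) (f (t • θ)) = graphPt (hseq k • θ) (c * hseq k) := by
            rw [hzdef]
            rw [graphPt_sub]
            congr 1
            · rw [← sub_smul]; congr 1; ring
            · ring
          rw [hd]
          have hsplit : graphPt (hseq k • θ) (c * hseq k) =
              graphPt (hseq k • θ) 0 + graphPt 0 (c * hseq k) := by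
            rw [show graphPt (hseq k • θ) 0 + graphPt 0 (c * hseq k)
              = graphPt (hseq k • θ + 0) (0 + c * hseq k) from rfl]
            rw [add_zero, zero_add]
          rw [hsplit]
          refine le_trans (norm_add_le _ _) ?_
          rw [show graphPt (hseq k • θ) (0:ℝ) =
            (WithLp.equiv 2 (EuclideanSpace ℝ (Fin m) × ℝ)).symm (hseq k • θ, 0) from rfl]
          rw [show graphPt (0 : EuclideanSpace ℝ (Fin m)) (c * hseq k) =
            (WithLp.equiv 2 (EuclideanSpace ℝ (Fin m) × ℝ)).symm (0, c * hseq k) from rfl]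
          rw [WithLp.equiv_symm_apply, WithLp.norm_toLp_fst, WithLp.norm_toLp_snd]
          rw [hmemθ θ hθ _ (hh0 k).le, Real.norm_eq_abs, abs_mul,
            abs_of_pos (hh0 k)]
          ring_nf
          nlinarith [hh0 k, abs_nonneg c]
        refine squeeze_zero (fun k => norm_nonneg _) hbound ?_
        have := hhtend.mul_const (1 + |c|)
        rwa [zero_mul] at this
      have hzφ : Filter.Tendsto (z ∘ φ) Filter.atTop (nhds (graphPt (t • θ) (f (t • θ)))) :=
        hztend.comp hφ.tendsto_atTop
      have hνlsup : ∀ u ∈ Ω, ⟪νl, u - graphPt (t • θ) (f (t • θ))⟫ ≤ 0 := by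
        intro u hu
        have htt : Filter.Tendsto (fun k => ⟪ν (φ k), u - z (φ k)⟫) Filter.atTop
            (nhds ⟪νl, u - graphPt (t • θ) (f (t • θ))⟫) :=
          hφtend.inner (tendsto_const_nhds.sub hzφ)
        exact le_of_tendsto htt
          (Filter.Eventually.of_forall fun k => hνsep (φ k) u (subset_closure hu))
      have hkeyc : 0 ≤ ⟪νl, graphPt θ c⟫ := by
        have hterm : ∀ k, 0 ≤ ⟪ν k, graphPt θ c⟫ := by
          intro k
          have hyc := hνsep k _ (frontier_subset_closure hyF)
          have hd : graphPt (t • θ) (f (t • θ)) - z k =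
              graphPt ((-(hseq k)) • θ) (-(c * hseq k)) := by
            rw [hzdef, graphPt_sub]
            congr 1
            · rw [← sub_smul]; congr 1; ring
            · ring
          rw [hd, inner_graphPt, real_inner_smul_right] at hyc
          rw [inner_graphPt]
          nlinarith [hh0 k, hyc]
        have htt : Filter.Tendsto (fun k => ⟪ν (φ k), graphPt θ c⟫) Filter.atTop
            (nhds ⟪νl, graphPt θ c⟫) := hφtend.inner tendsto_const_nhds
        exact ge_of_tendsto htt (Filter.Eventually.of_forall fun k => hterm (φ k))
      have htθ1 : ‖t • θ‖ < 1 := by rw [htθ]; exact ht1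
      obtain ⟨a, ha0, ha1, hsnd, haL, hsub⟩ :=
        normal_decomp hL hlip hf0 hc₁ htθ1 hνl1 hνlsup
      have hfstθ : a * c ≤ ⟪νl.fst, θ⟫ := by
        rw [inner_graphPt, hsnd] at hkeyc
        linarith
      have hmmval : ⟪νl, graphPt (t • θ) (f (t • θ)) - 0⟫
          = t * ⟪νl.fst, θ⟫ - a * f (t • θ) := by
        rw [sub_zero, inner_graphPt, hsnd, real_inner_smul_right]
        ring
      have hmm0 : a * (t * c - f (t • θ)) ≤ ⟪νl, graphPt (t • θ) (f (t • θ)) - 0⟫ := by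
        rw [hmmval]
        have h1 : t * (a * c) ≤ t * ⟪νl.fst, θ⟫ := mul_le_mul_of_nonneg_left hfstθ ht0.le
        nlinarith [h1]
      have hmmpos : 0 ≤ ⟪νl, graphPt (t • θ) (f (t • θ)) - 0⟫ :=
        le_trans (mul_nonneg ha0.le hpos) hmm0
      have hynorm : ‖graphPt (t • θ) (f (t • θ))‖ ^ 2 = t ^ 2 + f (t • θ) ^ 2 := by
        rw [norm_graphPt_sq, htθ]
      refine ⟨_, ⟨graphPt (t • θ) (f (t • θ)), νl, hyF, ?_, ?_, ⟨hνl1, hνlsup⟩, rfl⟩,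
        hmmpos, ?_⟩
      · rw [sub_zero]
        have hsqle : t ^ 2 ≤ ‖graphPt (t • θ) (f (t • θ))‖ ^ 2 := by
          rw [hynorm]; nlinarith [sq_nonneg (f (t • θ))]
        have h9 := Real.sqrt_le_sqrt hsqle
        rw [Real.sqrt_sq ht0.le, Real.sqrt_sq (norm_nonneg _)] at h9
        linarith
      · rw [sub_zero]
        have hsqle : ‖graphPt (t • θ) (f (t • θ))‖ ^ 2 ≤ (Real.sqrt (1 + L ^ 2) * t) ^ 2 := by
          rw [hynorm, mul_pow, hsq]
          nlinarith [hgtL, hgt0, ht0.le]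
        have h9 := Real.sqrt_le_sqrt hsqle
        rw [Real.sqrt_sq (norm_nonneg _), Real.sqrt_sq (mul_nonneg hsqrt0 ht0.le)] at h9
        exact h9
      · simp only [Nrad, hcEq]
        have hA := mul_le_mul_of_nonneg_left hmm0 hsqrt0
        have hB := mul_le_mul_of_nonneg_right haL hpos
        nlinarith [hA, hB]
    refine Real.sSup_le ?_ ?_
    · rintro x ⟨θ, hθ, rfl⟩
      obtain ⟨mm, hmem, hmm0, hle⟩ := main θ hθ
      refine le_trans hle ?_
      refine mul_le_mul_of_nonneg_left ?_ hsqrt0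
      simp only [Mfun]
      exact le_csSup hMbdd hmem
    · obtain ⟨mm, hmem, hmm0, _⟩ := main _ hθ₀
      refine mul_nonneg hsqrt0 ?_
      simp only [Mfun]
      exact le_trans hmm0 (le_csSup hMbdd hmem)
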